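/- With $\sigma_n$ a uniformly random sticky map and $t \in (1/3, 1)$, $y \in \mathbb{R}$: the probability $P_n(t,y)$ that $(t,y) \in K_{\sigma_n}$ satisfies $P_n(t,y) \le C/n$ for an absolute constant $C$. -/

import Mathlib

open scoped ENNReal Classical

/-- A subtree of the rooted ternary tree of depth `n`: vertices are ternary
strings (lists over `Fin 3`), it contains the root (the empty string), is closed
under taking prefixes, and has depth at most `n`. -/
def IsSubtree (n : ℕ) (T : List (Fin 3) → Prop) : Prop :=
  T [] ∧ (∀ l a, T (l ++ [a]) → T l) ∧ ∀ l, T l → l.length ≤ n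

/-- The edges of the full rooted ternary tree of depth `n`, indexed by their
lower endpoint: the edge at depth `k+1` is determined by a vertex at depth
`k+1`, i.e. a string of length `k+1`. -/
def TernaryEdges (n : ℕ) := Σ k : Fin n, (Fin (k + 1) → Fin 3)

/-- The percolation configuration `ω` (`true` = edge retained) admits a fully
retained path from the root to a depth-`n` vertex of `T`. -/
def Survives (n : ℕ) (T : List (Fin 3) → Prop) (ω : TernaryEdges n → Bool) : Prop :=
  ∃ s : Fin n → Fin 3, T (List.ofFn s) ∧
    ∀ k : Fin n, ω ⟨k, fun i => s (Fin.castLE k.isLt i)⟩ = true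

/-- The survival probability of Bernoulli(1/2) bond percolation on the subtree
`T` of the depth-`n` ternary tree: each edge is removed independently with
probability 1/2 (configurations are uniform), and we ask for a retained path
from the root to depth `n`. -/
noncomputable def survivalProb (n : ℕ) (T : List (Fin 3) → Prop) : ℝ :=
  (Nat.card {ω : TernaryEdges n → Bool // Survives n T ω} : ℝ) /
    (Nat.card (TernaryEdges n → Bool) : ℝ)

open MeasureTheory
open scoped ENNReal

/-- The real number `∑ s j / 3^(j+1)` associated to the ternary string `s`. -/
noncomputable def valF {n : ℕ} (s : Fin n → Fin 3) : ℝ :=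
  ∑ j : Fin n, (s j : ℝ) / 3 ^ ((j : ℕ) + 1)

/-- A map `σ : T_n → C_n` is sticky if its values have all ternary digits in
`{0, 2}` and the `j`-th digit of `σ s` depends only on the first `j` digits
of `s`. -/
def Sticky {n : ℕ} (σ : (Fin n → Fin 3) → (Fin n → Fin 3)) : Prop :=
  (∀ s j, σ s j ≠ 1) ∧
    ∀ s₁ s₂ : Fin n → Fin 3, ∀ j : Fin n,
      (∀ i : Fin n, i ≤ j → s₁ i = s₂ i) → σ s₁ j = σ s₂ j

/-- The parallelogram (thin tube) over `0 ≤ x ≤ 1` with `y`-intercept `b`,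
slope `v` and vertical thickness `3 ^ (-(n+1))`: its corners are `(0, b)`,
`(0, b + 3^{-(n+1)})`, `(1, b + v)`, `(1, b + v + 3^{-(n+1)})`. -/
def tube (n : ℕ) (b v : ℝ) : Set (ℝ × ℝ) :=
  {p | 0 ≤ p.1 ∧ p.1 ≤ 1 ∧ b + v * p.1 ≤ p.2 ∧
    p.2 ≤ b + v * p.1 + 1 / 3 ^ (n + 1)}

/-- The parallelogram `P_{σ,s}` with corners `(0, s/3)`, `(0, s/3 + 3^{-(n+1)})`,
`(1, s/3 + σ(s))`, `(1, s/3 + 3^{-(n+1)} + σ(s))`. -/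
noncomputable def Ptube {n : ℕ} (σ : (Fin n → Fin 3) → (Fin n → Fin 3))
    (s : Fin n → Fin 3) : Set (ℝ × ℝ) :=
  tube n (valF s / 3) (valF (σ s))

/-- The "Kakeya set" `K_σ` associated to a sticky map `σ`. -/
noncomputable def Kset {n : ℕ} (σ : (Fin n → Fin 3) → (Fin n → Fin 3)) :
    Set (ℝ × ℝ) :=
  ⋃ s : Fin n → Fin 3, Ptube σ s

/-- The vertical strip `S_j = [3^{-j}, 3^{1-j}] × ℝ`. -/
def strip (j : ℕ) : Set (ℝ × ℝ) :=
  Set.Icc ((3 : ℝ) ^ (-(j : ℤ))) ((3 : ℝ) ^ (1 - (j : ℤ))) ×ˢ Set.univ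

/-- The real number `.a₁a₂…a_k = ∑ a_j / 3^j` associated to a ternary string
given as a list of digits. -/
noncomputable def val3 : List (Fin 3) → ℝ
  | [] => 0
  | a :: l => ((a : ℝ) + val3 l) / 3


/-- The i.i.d. fair edge labels `r` on the ternary tree determine a (uniformly
random) sticky map: the `j`-th digit of `σ s` is `2` or `0` according to the
label of the edge from `π^(j-1) s` to `π^j s`. -/
def sigmaOf (n : ℕ) (r : TernaryEdges n → Bool) :
    (Fin n → Fin 3) → (Fin n → Fin 3) := fun s j =>
  if r ⟨j, fun i => s (Fin.castLE j.isLt i)⟩ then 2 else 0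

/-- `P_n(t, y)`: the probability, over a uniformly random sticky map
`σ = sigmaOf n r`, that `(t, y) ∈ K_σ`. -/
noncomputable def Pn (n : ℕ) (t y : ℝ) : ℝ :=
  (Nat.card {r : TernaryEdges n → Bool // (t, y) ∈ Kset (sigmaOf n r)} : ℝ) /
    (Nat.card (TernaryEdges n → Bool) : ℝ)

/-- The tree `T^*_{n,t,y}`: the set of ternary strings `s` of length `≤ n`
admitting some `c ∈ C_k` (`k` the length of `s`) with `y ∈ I_{s,c,t}`,
i.e. `c_{t,y}(s)` is finite. -/
def inTree (n : ℕ) (t y : ℝ) (l : List (Fin 3)) : Prop :=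
  l.length ≤ n ∧ ∃ c : List (Fin 3), c.length = l.length ∧
    (∀ d ∈ c, d ≠ 1) ∧
    val3 l / 3 + t * val3 c ≤ y ∧
    y ≤ val3 l / 3 + (1 + 3 * t) / 3 ^ (l.length + 1) + t * val3 c

open scoped NNReal

namespace PnProof

lemma valF_cons {j : ℕ} (a : Fin 3) (s : Fin j → Fin 3) :
    valF (Fin.cons a s) = (a : ℝ) / 3 + valF s / 3 := by
  unfold valF
  rw [Fin.sum_univ_succ]
  have h : ∀ i : Fin j, (((Fin.cons a s : Fin (j+1) → Fin 3) i.succ : Fin 3) : ℝ) / 3 ^ ((i.succ : ℕ) + 1)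
      = ((s i : ℝ) / 3 ^ ((i : ℕ) + 1)) / 3 := by
    intro i
    rw [Fin.cons_succ, Fin.val_succ]
    ring
  rw [Finset.sum_congr rfl (fun i _ => h i), ← Finset.sum_div]
  simp

lemma valF_nonneg {j : ℕ} (s : Fin j → Fin 3) : 0 ≤ valF s := by
  apply Finset.sum_nonneg; intro i _; positivity

lemma fin3_le_two (a : Fin 3) : (a : ℝ) ≤ 2 := by
  have : (a : ℕ) ≤ 2 := by omega
  exact_mod_cast this

lemma valF_le {j : ℕ} (s : Fin j → Fin 3) : valF s ≤ 1 - (1/3 : ℝ) ^ j := by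
  induction j with
  | zero => simp [valF]
  | succ j ih =>
    rw [← Fin.cons_self_tail s, valF_cons]
    have h1 := fin3_le_two (s 0)
    have h2 := ih (Fin.tail s)
    have h3 : (1/3 : ℝ) ^ (j+1) = (1/3) ^ j * (1/3) := pow_succ _ _
    linarith

lemma valF_sep {j : ℕ} : ∀ s s' : Fin j → Fin 3, s ≠ s' →
    (1/3 : ℝ) ^ j ≤ |valF s - valF s'| := by
  induction j with
  | zero => intro s s' h; exact absurd (Subsingleton.elim s s') h
  | succ j ih =>
    intro s s' h
    have hds := Fin.cons_self_tail s
    have hds' := Fin.cons_self_tail s'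
    rw [← hds, ← hds', valF_cons, valF_cons]
    have hb1 := valF_nonneg (Fin.tail s)
    have hb2 := valF_nonneg (Fin.tail s')
    have hb3 := valF_le (Fin.tail s)
    have hb4 := valF_le (Fin.tail s')
    have h3 : (1/3 : ℝ) ^ (j+1) = (1/3) ^ j * (1/3) := pow_succ _ _
    by_cases h0 : s 0 = s' 0
    · have ht : Fin.tail s ≠ Fin.tail s' := by
        intro he
        apply h
        rw [← hds, ← hds', h0, he]
      have hsep := ih _ _ ht
      have heq : (s 0 : ℝ)/3 + valF (Fin.tail s)/3 - ((s' 0 : ℝ)/3 + valF (Fin.tail s')/3)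
          = (valF (Fin.tail s) - valF (Fin.tail s'))/3 := by rw [h0]; ring
      rw [heq, abs_div, abs_of_nonneg (by norm_num : (0:ℝ) ≤ 3)]
      linarith
    · have ha : 1 ≤ |(s 0 : ℝ) - (s' 0 : ℝ)| := by
        have hne : (s 0 : ℕ) ≠ (s' 0 : ℕ) := fun hh => h0 (Fin.ext hh)
        rcases Nat.lt_or_ge (s 0 : ℕ) (s' 0 : ℕ) with hlt | hge
        · have hc : ((s 0 : ℕ) : ℝ) + 1 ≤ ((s' 0 : ℕ) : ℝ) := by exact_mod_cast hlt
          rw [abs_sub_comm, abs_of_nonneg (by linarith)]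
          linarith
        · have hlt : (s' 0 : ℕ) < (s 0 : ℕ) := Nat.lt_of_le_of_ne hge (Ne.symm hne)
          have hc : ((s' 0 : ℕ) : ℝ) + 1 ≤ ((s 0 : ℕ) : ℝ) := by exact_mod_cast hlt
          rw [abs_of_nonneg (by linarith)]
          linarith
      set D := (s 0 : ℝ)/3 - (s' 0 : ℝ)/3 with hD
      set E := valF (Fin.tail s)/3 - valF (Fin.tail s')/3 with hE
      have hDE : (s 0 : ℝ)/3 + valF (Fin.tail s)/3 - ((s' 0 : ℝ)/3 + valF (Fin.tail s')/3) = D + E := by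
        rw [hD, hE]; ring
      rw [hDE]
      have h5 : |D| - |E| ≤ |D + E| := by
        have := abs_sub_abs_le_abs_sub D (-E)
        simpa [sub_neg_eq_add] using this
      have h6 : (1:ℝ)/3 ≤ |D| := by
        rw [hD, show (s 0 : ℝ)/3 - (s' 0 : ℝ)/3 = ((s 0 : ℝ) - (s' 0 : ℝ))/3 by ring,
          abs_div, abs_of_nonneg (by norm_num : (0:ℝ) ≤ 3)]
        linarith
      have h7 : |E| ≤ (1 - (1/3:ℝ)^j)/3 := by
        rw [hE, show valF (Fin.tail s)/3 - valF (Fin.tail s')/3 = (valF (Fin.tail s) - valF (Fin.tail s'))/3 by ring,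
          abs_div, abs_of_nonneg (by norm_num : (0:ℝ) ≤ 3)]
        have : |valF (Fin.tail s) - valF (Fin.tail s')| ≤ 1 - (1/3:ℝ)^j := by
          rw [abs_le]; constructor <;> linarith
        linarith
      linarith

end PnProof

namespace PnProof

instance (n : ℕ) : Fintype (TernaryEdges n) := by unfold TernaryEdges; infer_instance

def rootEdge (n : ℕ) (a : Fin 3) : TernaryEdges (n+1) := ⟨0, fun _ => a⟩

def liftEdge (n : ℕ) (a : Fin 3) (e : TernaryEdges n) : TernaryEdges (n+1) :=
  ⟨e.1.succ, Fin.cons a e.2⟩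

def subCfg (n : ℕ) (r : TernaryEdges (n+1) → Bool) (a : Fin 3) :
    TernaryEdges n → Bool := fun e => r (liftEdge n a e)

noncomputable def ych (t y : ℝ) (a : Fin 3) (b : Bool) : ℝ :=
  3*y - (a:ℝ)/3 - (if b then 2*t else 0)

def Ev (n : ℕ) (t y : ℝ) (r : TernaryEdges n → Bool) : Prop :=
  (t, y) ∈ Kset (sigmaOf n r)

lemma sigmaOf_cons_zero (n : ℕ) (r : TernaryEdges (n+1) → Bool) (a : Fin 3)
    (s' : Fin n → Fin 3) :
    sigmaOf (n+1) r (Fin.cons a s') 0 = (if r (rootEdge n a) then 2 else 0) := by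
  unfold sigmaOf
  have hedge : (⟨(0 : Fin (n+1)), fun i => (Fin.cons a s' : Fin (n+1) → Fin 3) (Fin.castLE (Fin.isLt (0 : Fin (n+1))) i)⟩ : TernaryEdges (n+1)) = rootEdge n a := by
    unfold rootEdge
    congr 1
    funext i
    have hi : Fin.castLE (Fin.isLt (0 : Fin (n+1))) i = 0 := by
      have h2 := i.isLt
      ext
      simp only [Fin.coe_castLE, Fin.val_zero]
      simp only [Fin.val_zero] at h2
      have h0 : ((0 : Fin (n+1)) : ℕ) = 0 := rfl
      have h3 : ((Fin.castLE (Fin.isLt (0 : Fin (n+1))) i : Fin (n+1)) : ℕ) = i := rfl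
      exact h3.trans (by omega)
    rw [hi, Fin.cons_zero]
  congr 2
  exact congrArg r hedge

lemma sigmaOf_cons_succ (n : ℕ) (r : TernaryEdges (n+1) → Bool) (a : Fin 3)
    (s' : Fin n → Fin 3) (j : Fin n) :
    sigmaOf (n+1) r (Fin.cons a s') j.succ = sigmaOf n (subCfg n r a) s' j := by
  unfold sigmaOf subCfg liftEdge
  have hedge : (⟨j.succ, fun i => (Fin.cons a s' : Fin (n+1) → Fin 3) (Fin.castLE (Fin.isLt j.succ) i)⟩ : TernaryEdges (n+1))
      = (⟨j.succ, Fin.cons a (fun i => s' (Fin.castLE j.isLt i))⟩ : TernaryEdges (n+1)) := by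
    congr 1
    funext i
    induction i using Fin.cases with
    | zero =>
      have hi : Fin.castLE (Fin.isLt (j.succ)) (0 : Fin (j.val+1+1)) = 0 := by
        ext; simp [Fin.coe_castLE]
      rw [hi, Fin.cons_zero, Fin.cons_zero]
    | succ i' =>
      have hi : Fin.castLE (Fin.isLt (j.succ)) (i'.succ) = (Fin.castLE j.isLt i').succ := by
        ext; simp [Fin.coe_castLE]
      rw [hi, Fin.cons_succ, Fin.cons_succ]
  congr 2
  exact congrArg r hedge

lemma sigmaOf_cons (n : ℕ) (r : TernaryEdges (n+1) → Bool) (a : Fin 3)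
    (s' : Fin n → Fin 3) :
    sigmaOf (n+1) r (Fin.cons a s')
      = Fin.cons (if r (rootEdge n a) then 2 else 0) (sigmaOf n (subCfg n r a) s') := by
  have h0 := sigmaOf_cons_zero n r a s'
  have ht : Fin.tail (sigmaOf (n+1) r (Fin.cons a s')) = sigmaOf n (subCfg n r a) s' := by
    funext j
    exact sigmaOf_cons_succ n r a s' j
  rw [← Fin.cons_self_tail (sigmaOf (n+1) r (Fin.cons a s')), ht, h0]

lemma mem_Ptube_iff (n : ℕ) (t y : ℝ) (r : TernaryEdges (n+1) → Bool) (a : Fin 3)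
    (s' : Fin n → Fin 3) :
    ((t,y) ∈ Ptube (sigmaOf (n+1) r) (Fin.cons a s')) ↔
      ((t, ych t y a (r (rootEdge n a))) ∈ Ptube (sigmaOf n (subCfg n r a)) s') := by
  unfold Ptube tube
  simp only [Set.mem_setOf_eq]
  rw [valF_cons, sigmaOf_cons, valF_cons]
  set d : ℝ := (if r (rootEdge n a) then ((2:Fin 3):ℝ) else ((0:Fin 3):ℝ)) with hd
  have hd' : ((if r (rootEdge n a) then (2:Fin 3) else 0 : Fin 3) : ℝ) = d := by
    by_cases hb : r (rootEdge n a) <;> simp [hd, hb]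
  rw [hd']
  have hych : ych t y a (r (rootEdge n a)) = 3*y - (a:ℝ)/3 - d*t := by
    unfold ych
    by_cases hb : r (rootEdge n a) <;> simp [hd, hb] <;> ring
  rw [hych]
  have hp : (3:ℝ) * (1 / 3 ^ (n + 1 + 1)) = 1 / 3 ^ (n + 1) := by
    rw [pow_succ]; field_simp
  constructor
  · rintro ⟨h1, h2, h3, h4⟩
    refine ⟨h1, h2, by linarith, by linarith⟩
  · rintro ⟨h1, h2, h3, h4⟩
    refine ⟨h1, h2, by linarith, by linarith⟩

lemma Ev_succ_iff (n : ℕ) (t y : ℝ) (r : TernaryEdges (n+1) → Bool) :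
    Ev (n+1) t y r ↔ ∃ a : Fin 3, Ev n t (ych t y a (r (rootEdge n a))) (subCfg n r a) := by
  unfold Ev Kset
  rw [Set.mem_iUnion]
  constructor
  · rintro ⟨s, hs⟩
    refine ⟨s 0, ?_⟩
    rw [Set.mem_iUnion]
    refine ⟨Fin.tail s, ?_⟩
    rw [← mem_Ptube_iff]
    rwa [Fin.cons_self_tail]
  · rintro ⟨a, ha⟩
    rw [Set.mem_iUnion] at ha
    obtain ⟨s', hs'⟩ := ha
    exact ⟨Fin.cons a s', (mem_Ptube_iff n t y r a s').mpr hs'⟩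

/-! Part 3: counting -/

def cfgTo (n : ℕ) (r : TernaryEdges (n+1) → Bool) : Fin 3 → Bool × (TernaryEdges n → Bool) :=
  fun a => (r (rootEdge n a), subCfg n r a)

def cfgInv (n : ℕ) (g : Fin 3 → Bool × (TernaryEdges n → Bool)) : TernaryEdges (n+1) → Bool :=
  fun e => Fin.cases (motive := fun k : Fin (n+1) => (Fin (k.val+1) → Fin 3) → Bool)
      (fun f => (g (f 0)).1)
      (fun k' f => (g (f 0)).2 ⟨k', fun i => f i.succ⟩) e.1 e.2

def cfgEquiv (n : ℕ) : (TernaryEdges (n+1) → Bool) ≃ (Fin 3 → Bool × (TernaryEdges n → Bool)) where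
  toFun := cfgTo n
  invFun := cfgInv n
  left_inv r := by
    funext e
    obtain ⟨k, f⟩ := e
    unfold cfgInv cfgTo
    induction k using Fin.cases with
    | zero =>
      simp only [Fin.cases_zero]
      refine congrArg r ?_
      unfold rootEdge
      congr 1
      funext i
      have hi : i = 0 := by
        have h2 := i.isLt
        ext
        simp only [Fin.val_zero] at *
        omega
      rw [hi]
    | succ k' =>
      simp only [Fin.cases_succ]
      refine congrArg r ?_
      show liftEdge n (f 0) ⟨k', fun i => f i.succ⟩ = ⟨k'.succ, f⟩
      unfold liftEdge
      congr 1
      exact Fin.cons_self_tail f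
  right_inv g := by
    funext a
    unfold cfgTo cfgInv
    refine Prod.ext ?_ ?_
    · show (Fin.cases (motive := fun k : Fin (n+1) => (Fin (k.val+1) → Fin 3) → Bool)
        (fun f => (g (f 0)).1)
        (fun k' f => (g (f 0)).2 ⟨k', fun i => f i.succ⟩) ((rootEdge n a).1) ((rootEdge n a).2)) = (g a).1
      unfold rootEdge
      rw [Fin.cases_zero]
    · show subCfg n (cfgInv n g) a = (g a).2
      funext e
      show (Fin.cases (motive := fun k : Fin (n+1) => (Fin (k.val+1) → Fin 3) → Bool)
        (fun f => (g (f 0)).1)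
        (fun k' f => (g (f 0)).2 ⟨k', fun i => f i.succ⟩) ((liftEdge n a e).1) ((liftEdge n a e).2)) = (g a).2 e
      unfold liftEdge
      rw [Fin.cases_succ]
      simp only [Fin.cons_zero, Fin.cons_succ]
      rfl

noncomputable def Tot (n : ℕ) : ℕ := Nat.card (TernaryEdges n → Bool)

noncomputable def coN (n : ℕ) (t y : ℝ) : ℕ := Nat.card {r : TernaryEdges n → Bool // ¬ Ev n t y r}

lemma Tot_succ (n : ℕ) : Tot (n+1) = (2 * Tot n)^3 := by
  unfold Tot
  rw [Nat.card_congr (cfgEquiv n), Nat.card_pi]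
  rw [Finset.prod_const]
  rw [Nat.card_prod]
  have : Nat.card Bool = 2 := by rw [Nat.card_eq_fintype_card]; simp
  rw [this]
  simp

lemma Tot_pos (n : ℕ) : 0 < Tot n := Nat.card_pos

lemma card_Ev_add_coN (n : ℕ) (t y : ℝ) :
    Nat.card {r : TernaryEdges n → Bool // Ev n t y r} + coN n t y = Tot n := by
  unfold coN Tot
  rw [Nat.card_eq_fintype_card, Nat.card_eq_fintype_card, Nat.card_eq_fintype_card,
    Fintype.card_subtype_compl]
  have := Fintype.card_subtype_le (fun r : TernaryEdges n → Bool => Ev n t y r)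
  omega

lemma coN_succ (n : ℕ) (t y : ℝ) :
    coN (n+1) t y = ∏ a : Fin 3, (coN n t (ych t y a true) + coN n t (ych t y a false)) := by
  have e1 : {r : TernaryEdges (n+1) → Bool // ¬ Ev (n+1) t y r} ≃
      {g : Fin 3 → Bool × (TernaryEdges n → Bool) //
        ∀ a : Fin 3, ¬ Ev n t (ych t y a (g a).1) (g a).2} := by
    refine Equiv.subtypeEquiv (cfgEquiv n) ?_
    intro r
    rw [Ev_succ_iff, not_exists]
    exact Iff.rfl
  have e2 := Equiv.subtypePiEquivPi
    (p := fun (a : Fin 3) (x : Bool × (TernaryEdges n → Bool)) => ¬ Ev n t (ych t y a x.1) x.2)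
  have h1 : coN (n+1) t y
      = Nat.card (∀ a : Fin 3, {x : Bool × (TernaryEdges n → Bool) // ¬ Ev n t (ych t y a x.1) x.2}) :=
    Nat.card_congr (e1.trans e2)
  rw [h1, Nat.card_pi]
  refine Finset.prod_congr rfl (fun a _ => ?_)
  have e3 : {x : Bool × (TernaryEdges n → Bool) // ¬ Ev n t (ych t y a x.1) x.2} ≃
      Σ b : Bool, {c : TernaryEdges n → Bool // ¬ Ev n t (ych t y a b) c} :=
    { toFun := fun x => ⟨x.1.1, x.1.2, x.2⟩,
      invFun := fun x => ⟨(x.1, x.2.1), x.2.2⟩,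
      left_inv := fun x => rfl,
      right_inv := fun x => rfl }
  rw [Nat.card_congr e3, Nat.card_eq_fintype_card, Fintype.card_sigma, Fintype.sum_bool]
  unfold coN
  rw [Nat.card_eq_fintype_card, Nat.card_eq_fintype_card]

/-! windows -/

noncomputable def Wd (t : ℝ) (m : ℕ) : ℝ := 1/3 + t - t*(1/3)^m

lemma Ev_window {n : ℕ} {t y : ℝ} {r : TernaryEdges n → Bool} (ht0 : 0 ≤ t)
    (h : Ev n t y r) : 0 ≤ y ∧ y ≤ Wd t n := by
  obtain ⟨s, hs⟩ := Set.mem_iUnion.mp h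
  unfold Ptube tube at hs
  simp only [Set.mem_setOf_eq] at hs
  obtain ⟨-, -, h3, h4⟩ := hs
  have hv1 := valF_nonneg s
  have hv2 := valF_le s
  have hv3 := valF_nonneg (sigmaOf n r s)
  have hv4 := valF_le (sigmaOf n r s)
  have hx : (1:ℝ)/3^(n+1) = (1/3)^n/3 := by
    rw [div_pow, one_pow, pow_succ]
    ring
  have hxp : (0:ℝ) < (1/3)^n := by positivity
  constructor
  · have : 0 ≤ valF (sigmaOf n r s) * t := mul_nonneg hv3 ht0
    linarith
  · have h5 : valF (sigmaOf n r s) * t ≤ (1 - (1/3)^n) * t :=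
      mul_le_mul_of_nonneg_right hv4 ht0
    unfold Wd
    nlinarith

lemma Wd_lt {t : ℝ} (ht : 1/3 < t) (n : ℕ) : Wd t n < 2*t := by
  unfold Wd
  have hxp : (0:ℝ) < (1/3)^n := by positivity
  nlinarith

lemma Ev_excl {n : ℕ} {t y : ℝ} (ht : 1/3 < t)
    (h1 : ∃ r, Ev n t y r) (h2 : ∃ r', Ev n t (y - 2*t) r') : False := by
  obtain ⟨r, hr⟩ := h1
  obtain ⟨r', hr'⟩ := h2
  have ht0 : (0:ℝ) ≤ t := by linarith
  have w1 := Ev_window ht0 hr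
  have w2 := Ev_window ht0 hr'
  have := Wd_lt ht n
  linarith [w1.2, w2.1]

/-! Part 4: Milne superadditivity -/


lemma milne_pt (x y l m : ℝ≥0∞) (hlm : l + m = 1) :
    (x + y)⁻¹ ≤ l^2 * x⁻¹ + m^2 * y⁻¹ := by
  have hl1 : l ≤ 1 := le_of_le_of_eq le_self_add hlm
  have hm1 : m ≤ 1 := le_of_le_of_eq le_add_self hlm
  by_cases hl : l = 0
  · subst hl
    simp only [zero_add] at hlm
    subst hlm
    simp only [pow_two, zero_mul, mul_zero, zero_add, one_mul]
    exact ENNReal.inv_le_inv.mpr le_add_self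
  by_cases hm : m = 0
  · subst hm
    simp only [add_zero] at hlm
    subst hlm
    simp only [pow_two, zero_mul, mul_zero, add_zero, one_mul]
    exact ENNReal.inv_le_inv.mpr le_self_add
  by_cases hx : x = 0
  · subst hx
    have : l^2 * (0:ℝ≥0∞)⁻¹ = ⊤ := by
      rw [ENNReal.inv_zero, ENNReal.mul_top]
      positivity
    rw [this]
    simp
  by_cases hy : y = 0
  · subst hy
    have : m^2 * (0:ℝ≥0∞)⁻¹ = ⊤ := by
      rw [ENNReal.inv_zero, ENNReal.mul_top]
      positivity
    rw [this]
    simp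
  by_cases hxt : x = ⊤
  · subst hxt
    simp
  by_cases hyt : y = ⊤
  · subst hyt
    simp
  -- all finite nonzero
  have hlt : l ≠ ⊤ := fun h => by simp [h] at hl1
  have hmt : m ≠ ⊤ := fun h => by simp [h] at hm1
  lift x to ℝ≥0 using hxt
  lift y to ℝ≥0 using hyt
  lift l to ℝ≥0 using hlt
  lift m to ℝ≥0 using hmt
  have hx0 : (x:ℝ≥0) ≠ 0 := by exact_mod_cast hx
  have hy0 : (y:ℝ≥0) ≠ 0 := by exact_mod_cast hy
  have hxy0 : (x + y : ℝ≥0) ≠ 0 := fun h => hx0 (add_eq_zero.mp h).1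
  rw [← ENNReal.coe_add, ← ENNReal.coe_inv hxy0, ← ENNReal.coe_inv hx0, ← ENNReal.coe_inv hy0,
    ← ENNReal.coe_pow, ← ENNReal.coe_pow, ← ENNReal.coe_mul, ← ENNReal.coe_mul,
    ← ENNReal.coe_add, ENNReal.coe_le_coe, ← NNReal.coe_le_coe]
  push_cast
  have hlm' : (l:ℝ) + m = 1 := by exact_mod_cast hlm
  have hx' : (0:ℝ) < x := NNReal.coe_pos.mpr (pos_iff_ne_zero.mpr hx0)
  have hy' : (0:ℝ) < y := NNReal.coe_pos.mpr (pos_iff_ne_zero.mpr hy0)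
  rw [inv_eq_one_div, inv_eq_one_div, inv_eq_one_div]
  rw [mul_one_div, mul_one_div, div_add_div _ _ (ne_of_gt hx') (ne_of_gt hy'),
    div_le_div_iff₀ (by positivity) (by positivity)]
  have h3 : ((l:ℝ)^2 + 2*l*m + m^2) * ((x:ℝ)*(y:ℝ)) = (x:ℝ)*(y:ℝ) := by
    have h2 : ((l:ℝ) + m)^2 = 1 := by rw [hlm']; ring
    linear_combination ((x:ℝ)*(y:ℝ)) * h2
  nlinarith [sq_nonneg ((l:ℝ)*(y:ℝ) - (m:ℝ)*(x:ℝ)), h3]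




lemma milne_two {ι : Type*} (s : Finset ι) (x y : ι → ℝ≥0∞) :
    (∑ w ∈ s, (x w)⁻¹)⁻¹ + (∑ w ∈ s, (y w)⁻¹)⁻¹ ≤ (∑ w ∈ s, (x w + y w)⁻¹)⁻¹ := by
  set X := ∑ w ∈ s, (x w)⁻¹ with hX
  set Y := ∑ w ∈ s, (y w)⁻¹ with hY
  have hmonoX : ∑ w ∈ s, (x w + y w)⁻¹ ≤ X :=
    Finset.sum_le_sum (fun w _ => ENNReal.inv_le_inv.mpr le_self_add)
  have hmonoY : ∑ w ∈ s, (x w + y w)⁻¹ ≤ Y :=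
    Finset.sum_le_sum (fun w _ => ENNReal.inv_le_inv.mpr le_add_self)
  by_cases hXt : X = ⊤
  · rw [hXt]
    simp only [ENNReal.inv_top, zero_add]
    exact ENNReal.inv_le_inv.mpr hmonoY
  by_cases hYt : Y = ⊤
  · rw [hYt]
    simp only [ENNReal.inv_top, add_zero]
    exact ENNReal.inv_le_inv.mpr hmonoX
  by_cases hX0 : X = 0
  · have hall : ∀ w ∈ s, (x w + y w)⁻¹ = 0 := by
      intro w hw
      have h1 : (x w)⁻¹ = 0 := Finset.sum_eq_zero_iff.mp hX0 w hw
      rw [ENNReal.inv_eq_zero] at h1 ⊢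
      rw [h1]
      simp
    have hz : ∑ w ∈ s, (x w + y w)⁻¹ = 0 := Finset.sum_eq_zero hall
    rw [hz]
    simp
  by_cases hY0 : Y = 0
  · have hall : ∀ w ∈ s, (x w + y w)⁻¹ = 0 := by
      intro w hw
      have h1 : (y w)⁻¹ = 0 := Finset.sum_eq_zero_iff.mp hY0 w hw
      rw [ENNReal.inv_eq_zero] at h1 ⊢
      rw [h1]
      simp
    have hz : ∑ w ∈ s, (x w + y w)⁻¹ = 0 := Finset.sum_eq_zero hall
    rw [hz]
    simp
  · set c := X⁻¹ + Y⁻¹ with hc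
    have hXi0 : X⁻¹ ≠ 0 := by simp [ENNReal.inv_eq_zero, hXt]
    have hXit : X⁻¹ ≠ ⊤ := by simp [ENNReal.inv_eq_top, hX0]
    have hYi0 : Y⁻¹ ≠ 0 := by simp [ENNReal.inv_eq_zero, hYt]
    have hYit : Y⁻¹ ≠ ⊤ := by simp [ENNReal.inv_eq_top, hY0]
    have hc0 : c ≠ 0 := fun h => hXi0 (add_eq_zero.mp h).1
    have hct : c ≠ ⊤ := by
      rw [hc]
      exact ENNReal.add_ne_top.mpr ⟨hXit, hYit⟩
    have hlm : X⁻¹/c + Y⁻¹/c = 1 := by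
      rw [ENNReal.div_add_div_same, ← hc, ENNReal.div_self hc0 hct]
    have hpt : ∀ w ∈ s, (x w + y w)⁻¹ ≤ (X⁻¹/c)^2 * (x w)⁻¹ + (Y⁻¹/c)^2 * (y w)⁻¹ :=
      fun w _ => milne_pt _ _ _ _ hlm
    have hsum : ∑ w ∈ s, (x w + y w)⁻¹ ≤ (X⁻¹/c)^2 * X + (Y⁻¹/c)^2 * Y := by
      calc ∑ w ∈ s, (x w + y w)⁻¹
          ≤ ∑ w ∈ s, ((X⁻¹/c)^2 * (x w)⁻¹ + (Y⁻¹/c)^2 * (y w)⁻¹) := Finset.sum_le_sum hpt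
        _ = (X⁻¹/c)^2 * X + (Y⁻¹/c)^2 * Y := by
            rw [Finset.sum_add_distrib, ← Finset.mul_sum, ← Finset.mul_sum]
    have hXval : (X⁻¹/c)^2 * X = X⁻¹ * (c⁻¹)^2 := by
      have h1 : X⁻¹ * X = 1 := ENNReal.inv_mul_cancel hX0 hXt
      calc (X⁻¹/c)^2 * X = (X⁻¹ * X) * (X⁻¹ * (c⁻¹)^2) := by rw [div_eq_mul_inv]; ring
        _ = X⁻¹ * (c⁻¹)^2 := by rw [h1, one_mul]
    have hYval : (Y⁻¹/c)^2 * Y = Y⁻¹ * (c⁻¹)^2 := by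
      have h1 : Y⁻¹ * Y = 1 := ENNReal.inv_mul_cancel hY0 hYt
      calc (Y⁻¹/c)^2 * Y = (Y⁻¹ * Y) * (Y⁻¹ * (c⁻¹)^2) := by rw [div_eq_mul_inv]; ring
        _ = Y⁻¹ * (c⁻¹)^2 := by rw [h1, one_mul]
    have hcc : X⁻¹ * (c⁻¹)^2 + Y⁻¹ * (c⁻¹)^2 = c⁻¹ := by
      rw [← add_mul, ← hc]
      calc c * (c⁻¹)^2 = (c * c⁻¹) * c⁻¹ := by ring
        _ = c⁻¹ := by rw [ENNReal.mul_inv_cancel hc0 hct, one_mul]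
    have hfin : ∑ w ∈ s, (x w + y w)⁻¹ ≤ c⁻¹ := by
      rw [← hcc, ← hXval, ← hYval]
      exact hsum
    calc X⁻¹ + Y⁻¹ = c := hc.symm
      _ = (c⁻¹)⁻¹ := (inv_inv c).symm
      _ ≤ (∑ w ∈ s, (x w + y w)⁻¹)⁻¹ := ENNReal.inv_le_inv.mpr hfin

lemma milne_sum {ι κ : Type*} [DecidableEq κ] (s : Finset ι) (K : Finset κ) (x : κ → ι → ℝ≥0∞) :
    ∑ k ∈ K, (∑ w ∈ s, (x k w)⁻¹)⁻¹ ≤ (∑ w ∈ s, (∑ k ∈ K, x k w)⁻¹)⁻¹ := by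
  induction K using Finset.induction_on with
  | empty => simp
  | @insert a K ha ih =>
    rw [Finset.sum_insert ha]
    calc (∑ w ∈ s, (x a w)⁻¹)⁻¹ + ∑ k ∈ K, (∑ w ∈ s, (x k w)⁻¹)⁻¹
        ≤ (∑ w ∈ s, (x a w)⁻¹)⁻¹ + (∑ w ∈ s, (∑ k ∈ K, x k w)⁻¹)⁻¹ := add_le_add_right ih _
      _ ≤ (∑ w ∈ s, (x a w + ∑ k ∈ K, x k w)⁻¹)⁻¹ := milne_two s (x a) (fun w => ∑ k ∈ K, x k w)
      _ = (∑ w ∈ s, (∑ k ∈ insert a K, x k w)⁻¹)⁻¹ := by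
          congr 1
          refine Finset.sum_congr rfl (fun w _ => ?_)
          rw [Finset.sum_insert ha]


/-! Part 5: conductance, levels -/

noncomputable def uC (C : ℝ≥0∞) : ℝ≥0∞ := (1 + 2*C⁻¹)⁻¹

noncomputable def Cnd (t : ℝ) : ℕ → ℝ → ℝ≥0∞
  | 0, y => if 0 ≤ y ∧ y ≤ 1/3 then ⊤ else 0
  | (n+1), y => ∑ a : Fin 3, uC (∑ b : Bool, Cnd t n (ych t y a b))

noncomputable def Xv (t : ℝ) {j : ℕ} (s : Fin j → Fin 3) (bb : Fin j → Bool) : ℝ :=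
  valF s / 3 + t * valF (fun i => if bb i then 2 else 0)

def AliveP (t y : ℝ) (n j : ℕ) (p : (Fin j → Fin 3) × (Fin j → Bool)) : Prop :=
  Xv t p.1 p.2 ≤ y ∧ y ≤ Xv t p.1 p.2 + Wd t (n - j) * (1/3)^j

noncomputable def lv (t y : ℝ) (n j : ℕ) : ℕ :=
  Nat.card {p : (Fin j → Fin 3) × (Fin j → Bool) // AliveP t y n j p}

noncomputable def Bser (t y : ℝ) (n : ℕ) : ℝ≥0∞ :=
  ∑ k ∈ Finset.range n, (2^k : ℝ≥0∞) / (lv t y n (k+1) : ℝ≥0∞)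

lemma uC_zero : uC 0 = 0 := by simp [uC]

lemma uC_ne_zero {C : ℝ≥0∞} (h : uC C ≠ 0) : C ≠ 0 := by
  intro h0
  rw [h0, uC_zero] at h
  exact h rfl

lemma uC_le_one (C : ℝ≥0∞) : uC C ≤ 1 := by
  rw [uC]
  exact ENNReal.inv_le_one.mpr le_self_add

lemma uC_mono {C D : ℝ≥0∞} (h : C ≤ D) : uC C ≤ uC D := by
  unfold uC
  exact ENNReal.inv_le_inv.mpr (add_le_add_right (mul_le_mul_right (ENNReal.inv_le_inv.mpr h) 2) 1)

lemma Wd_zero (t : ℝ) : Wd t 0 = 1/3 := by simp [Wd]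

lemma Wd_succ (t : ℝ) (n : ℕ) : (Wd t n + 2/3 + 2*t)/3 = Wd t (n+1) := by
  unfold Wd
  rw [pow_succ]
  ring

lemma digcast (b : Bool) : (((if b then 2 else 0) : Fin 3) : ℝ) = if b then 2 else 0 := by
  cases b <;> simp

lemma ifdig_cons {j : ℕ} (b : Bool) (bb : Fin j → Bool) :
    (fun i => if (Fin.cons b bb : Fin (j+1) → Bool) i then (2 : Fin 3) else 0)
      = Fin.cons (if b then 2 else 0) (fun i => if bb i then 2 else 0) := by
  funext i
  induction i using Fin.cases with
  | zero => rw [Fin.cons_zero, Fin.cons_zero]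
  | succ i' => rw [Fin.cons_succ, Fin.cons_succ]

lemma Xv_cons {j : ℕ} (t : ℝ) (a : Fin 3) (s : Fin j → Fin 3) (b : Bool) (bb : Fin j → Bool) :
    Xv t (Fin.cons a s) (Fin.cons b bb)
      = (a:ℝ)/9 + (if b then 2*t else 0)/3 + Xv t s bb / 3 := by
  unfold Xv
  rw [valF_cons, ifdig_cons, valF_cons, digcast]
  cases b <;> simp <;> ring

lemma AliveP_cons_iff {t y : ℝ} {n j : ℕ} (a : Fin 3) (s : Fin j → Fin 3)
    (b : Bool) (bb : Fin j → Bool) :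
    AliveP t y (n+1) (j+1) (Fin.cons a s, Fin.cons b bb)
      ↔ AliveP t (ych t y a b) n j (s, bb) := by
  unfold AliveP ych
  simp only
  rw [Xv_cons, Nat.succ_sub_succ]
  have h3 : ((1:ℝ)/3)^(j+1) = (1/3)^j * (1/3) := pow_succ _ _
  have hW : Wd t (n-j) * (1/3:ℝ)^(j+1) = (Wd t (n-j) * (1/3)^j)/3 := by rw [h3]; ring
  constructor
  · rintro ⟨h1, h2⟩
    constructor <;> [linarith; linarith]
  · rintro ⟨h1, h2⟩
    constructor <;> [linarith; linarith]

def aliveEquiv (t y : ℝ) (n j : ℕ) :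
    {p : (Fin (j+1) → Fin 3) × (Fin (j+1) → Bool) // AliveP t y (n+1) (j+1) p} ≃
    Σ ab : Fin 3 × Bool,
      {p : (Fin j → Fin 3) × (Fin j → Bool) // AliveP t (ych t y ab.1 ab.2) n j p} where
  toFun p := ⟨(p.1.1 0, p.1.2 0), ⟨(Fin.tail p.1.1, Fin.tail p.1.2), by
    refine (AliveP_cons_iff _ _ _ _).mp ?_
    rw [Fin.cons_self_tail, Fin.cons_self_tail]
    exact p.2⟩⟩
  invFun q := ⟨(Fin.cons q.1.1 q.2.1.1, Fin.cons q.1.2 q.2.1.2),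
    (AliveP_cons_iff _ _ _ _).mpr (by
      have := q.2.2
      exact this)⟩
  left_inv p := by
    refine Subtype.ext ?_
    refine Prod.ext ?_ ?_ <;> simp [Fin.cons_self_tail]
  right_inv q := by
    obtain ⟨⟨a, b⟩, ⟨⟨s, bb⟩, h⟩⟩ := q
    simp
    rfl

lemma lv_succ (t y : ℝ) (n j : ℕ) :
    lv t y (n+1) (j+1) = ∑ a : Fin 3, ∑ b : Bool, lv t (ych t y a b) n j := by
  unfold lv
  rw [Nat.card_congr (aliveEquiv t y n j), Nat.card_eq_fintype_card, Fintype.card_sigma,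
    Fintype.sum_prod_type]
  refine Finset.sum_congr rfl (fun a _ => Finset.sum_congr rfl (fun b _ => ?_))
  rw [Nat.card_eq_fintype_card]

lemma Xv_zero (t : ℝ) (s : Fin 0 → Fin 3) (bb : Fin 0 → Bool) : Xv t s bb = 0 := by
  unfold Xv valF
  simp

lemma lv_zero (t y : ℝ) (n : ℕ) :
    lv t y n 0 = if 0 ≤ y ∧ y ≤ Wd t n then 1 else 0 := by
  unfold lv
  by_cases h : 0 ≤ y ∧ y ≤ Wd t n
  · rw [if_pos h]
    have hne : Nonempty {p : (Fin 0 → Fin 3) × (Fin 0 → Bool) // AliveP t y n 0 p} := by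
      refine ⟨⟨(Fin.elim0, Fin.elim0), ?_⟩⟩
      unfold AliveP
      rw [Xv_zero]
      simpa using h
    have hsub : Subsingleton {p : (Fin 0 → Fin 3) × (Fin 0 → Bool) // AliveP t y n 0 p} := by
      constructor
      rintro ⟨⟨s1, b1⟩, _⟩ ⟨⟨s2, b2⟩, _⟩
      refine Subtype.ext ?_
      refine Prod.ext ?_ ?_ <;> exact Subsingleton.elim _ _
    exact Nat.card_unique
  · rw [if_neg h]
    have : IsEmpty {p : (Fin 0 → Fin 3) × (Fin 0 → Bool) // AliveP t y n 0 p} := by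
      constructor
      rintro ⟨⟨s, bb⟩, hp⟩
      apply h
      have := hp
      unfold AliveP at this
      rw [Xv_zero] at this
      simpa using this
    exact Nat.card_of_isEmpty

lemma Cnd_window {t : ℝ} (ht0 : 0 ≤ t) :
    ∀ (n : ℕ) (y : ℝ), Cnd t n y ≠ 0 → 0 ≤ y ∧ y ≤ Wd t n := by
  intro n
  induction n with
  | zero =>
    intro y h
    unfold Cnd at h
    by_cases hy : 0 ≤ y ∧ y ≤ 1/3
    · rw [Wd_zero]
      exact hy
    · rw [if_neg hy] at h
      exact absurd rfl h
  | succ n ih =>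
    intro y h
    unfold Cnd at h
    have ha : ∃ a : Fin 3, uC (∑ b : Bool, Cnd t n (ych t y a b)) ≠ 0 := by
      by_contra hc
      push_neg at hc
      exact h (Finset.sum_eq_zero (fun a _ => hc a))
    obtain ⟨a, ha⟩ := ha
    have hC : (∑ b : Bool, Cnd t n (ych t y a b)) ≠ 0 := uC_ne_zero ha
    have hb : ∃ b : Bool, Cnd t n (ych t y a b) ≠ 0 := by
      by_contra hc
      push_neg at hc
      exact hC (Finset.sum_eq_zero (fun b _ => hc b))
    obtain ⟨b, hb⟩ := hb
    have hw := ih (ych t y a b) hb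
    unfold ych at hw
    have ha2 : (a:ℝ) ≤ 2 := fin3_le_two a
    have ha0 : (0:ℝ) ≤ (a:ℝ) := by positivity
    have hd0 : (0:ℝ) ≤ (if b then 2*t else 0) := by cases b <;> simp <;> linarith
    have hd2 : (if b then 2*t else 0) ≤ 2*t := by cases b <;> simp <;> linarith
    have hWs := Wd_succ t n
    constructor
    · linarith [hw.1]
    · linarith [hw.2]

lemma lv_bound {t : ℝ} (ht1 : 1/3 < t) (ht2 : t < 1) (y : ℝ) (n j : ℕ) :
    lv t y n j ≤ 5 * 2^j := by
  classical
  have hW4 : Wd t (n-j) < 4/3 := by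
    unfold Wd
    have h1 : (0:ℝ) < (1/3)^(n-j) := by positivity
    have h2 : ((1:ℝ)/3)^(n-j) ≤ 1 := by
      apply pow_le_one₀ <;> norm_num
    nlinarith
  have hpow : ((1:ℝ)/3)^j * 3^j = 1 := by
    rw [← mul_pow]
    norm_num
  have hp3 : (0:ℝ) < (3:ℝ)^j := by positivity
  set W := Wd t (n-j) with hWdef
  set lo : (Fin j → Bool) → ℝ := fun bb =>
    3*(y - t*valF (fun i => if bb i then (2:Fin 3) else 0)) - 3*W*(1/3)^j with hlo
  have hbound : ∀ p : {p : (Fin j → Fin 3) × (Fin j → Bool) // AliveP t y n j p},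
      0 ≤ (valF p.1.1 - lo p.1.2) * 3^j ∧ (valF p.1.1 - lo p.1.2) * 3^j < 5 := by
    rintro ⟨⟨s, bb⟩, hp⟩
    obtain ⟨h1, h2⟩ := hp
    unfold Xv at h1 h2
    simp only at h1 h2
    have hlo' : lo bb = 3*(y - t*valF (fun i => if bb i then (2:Fin 3) else 0)) - 3*W*(1/3)^j := rfl
    constructor
    · have : lo bb ≤ valF s := by rw [hlo']; nlinarith
      nlinarith
    · have : valF s ≤ lo bb + 3*W*(1/3)^j := by rw [hlo']; nlinarith
      have hg : (valF s - lo bb) * 3^j ≤ 3*W*((1/3)^j * 3^j) := by nlinarith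
      rw [hpow] at hg
      nlinarith
  let F : {p : (Fin j → Fin 3) × (Fin j → Bool) // AliveP t y n j p} → (Fin j → Bool) × Fin 5 :=
    fun p => (p.1.2, ⟨(⌊(valF p.1.1 - lo p.1.2) * 3^j⌋).toNat, by
      obtain ⟨hg0, hg5⟩ := hbound p
      have hfl : (⌊(valF p.1.1 - lo p.1.2) * 3^j⌋ : ℝ) < 5 :=
        lt_of_le_of_lt (Int.floor_le _) hg5
      have hfl5 : ⌊(valF p.1.1 - lo p.1.2) * 3^j⌋ < 5 := by exact_mod_cast hfl
      have hfl0 : 0 ≤ ⌊(valF p.1.1 - lo p.1.2) * 3^j⌋ := Int.floor_nonneg.mpr hg0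
      omega⟩)
  have hinj : Function.Injective F := by
    rintro ⟨⟨s1, b1⟩, hp1⟩ ⟨⟨s2, b2⟩, hp2⟩ hEq
    have hb : b1 = b2 := congrArg Prod.fst hEq
    subst hb
    have hfin : (⌊(valF s1 - lo b1) * 3^j⌋).toNat = (⌊(valF s2 - lo b1) * 3^j⌋).toNat := by
      have := congrArg Prod.snd hEq
      simpa using congrArg Fin.val this
    have hg01 := (hbound ⟨⟨s1, b1⟩, hp1⟩).1
    have hg02 := (hbound ⟨⟨s2, b1⟩, hp2⟩).1
    simp only at hg01 hg02
    have hfl01 : 0 ≤ ⌊(valF s1 - lo b1) * 3^j⌋ := Int.floor_nonneg.mpr hg01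
    have hfl02 : 0 ≤ ⌊(valF s2 - lo b1) * 3^j⌋ := Int.floor_nonneg.mpr hg02
    have hfeq : ⌊(valF s1 - lo b1) * 3^j⌋ = ⌊(valF s2 - lo b1) * 3^j⌋ := by omega
    by_cases hs : s1 = s2
    · subst hs
      rfl
    · exfalso
      have hsep := valF_sep s1 s2 hs
      have h1a : (⌊(valF s1 - lo b1) * 3^j⌋ : ℝ) ≤ (valF s1 - lo b1) * 3^j := Int.floor_le _
      have h1b : (valF s1 - lo b1) * 3^j < ⌊(valF s1 - lo b1) * 3^j⌋ + 1 := Int.lt_floor_add_one _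
      have h2a : (⌊(valF s2 - lo b1) * 3^j⌋ : ℝ) ≤ (valF s2 - lo b1) * 3^j := Int.floor_le _
      have h2b : (valF s2 - lo b1) * 3^j < ⌊(valF s2 - lo b1) * 3^j⌋ + 1 := Int.lt_floor_add_one _
      rw [hfeq] at h1a h1b
      have hdiff : (valF s1 - valF s2) * 3^j
          = ((valF s1 - lo b1) * 3^j) - ((valF s2 - lo b1) * 3^j) := by ring
      have habs : |(valF s1 - valF s2) * 3^j| < 1 := by
        rw [hdiff, abs_sub_lt_iff]
        constructor <;> linarith
      have heq2 : |valF s1 - valF s2| * 3^j = |(valF s1 - valF s2) * 3^j| := by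
        rw [abs_mul, abs_of_nonneg (le_of_lt hp3)]
      have hge : ((1:ℝ)/3)^j * 3^j ≤ |valF s1 - valF s2| * 3^j :=
        mul_le_mul_of_nonneg_right hsep (le_of_lt hp3)
      rw [hpow] at hge
      linarith
  calc lv t y n j ≤ Nat.card ((Fin j → Bool) × Fin 5) :=
        Nat.card_le_card_of_injective F hinj
    _ = 5 * 2^j := by
        rw [Nat.card_eq_fintype_card]
        simp [Fintype.card_prod]
        ring

/-! Part 6: Lemma II -/

lemma card_filter_le_lv {t : ℝ} (ht0 : 0 ≤ t) (n : ℕ) (y : ℝ) :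
    (Finset.univ.filter
      (fun a : Fin 3 => (∑ b : Bool, Cnd t n (ych t y a b)) ≠ 0)).card ≤ lv t y (n+1) 1 := by
  rw [lv_succ]
  have h1 : ∀ a ∈ Finset.univ.filter
      (fun a : Fin 3 => (∑ b : Bool, Cnd t n (ych t y a b)) ≠ 0),
      1 ≤ ∑ b : Bool, lv t (ych t y a b) n 0 := by
    intro a ha
    rw [Finset.mem_filter] at ha
    have hC := ha.2
    have hb : ∃ b : Bool, Cnd t n (ych t y a b) ≠ 0 := by
      by_contra hc
      push_neg at hc
      exact hC (Finset.sum_eq_zero (fun b _ => hc b))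
    obtain ⟨b, hb⟩ := hb
    have hw := Cnd_window ht0 n (ych t y a b) hb
    have hlv : lv t (ych t y a b) n 0 = 1 := by rw [lv_zero, if_pos hw]
    calc 1 = lv t (ych t y a b) n 0 := hlv.symm
      _ ≤ ∑ b : Bool, lv t (ych t y a b) n 0 :=
          Finset.single_le_sum (f := fun c : Bool => lv t (ych t y a c) n 0)
            (fun _ _ => Nat.zero_le _) (Finset.mem_univ b)
  calc (Finset.univ.filter _).card
      = ∑ a ∈ Finset.univ.filter
          (fun a : Fin 3 => (∑ b : Bool, Cnd t n (ych t y a b)) ≠ 0), 1 := by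
        rw [Finset.sum_const, smul_eq_mul, mul_one]
    _ ≤ ∑ a ∈ Finset.univ.filter
          (fun a : Fin 3 => (∑ b : Bool, Cnd t n (ych t y a b)) ≠ 0),
          ∑ b : Bool, lv t (ych t y a b) n 0 := Finset.sum_le_sum h1
    _ ≤ ∑ a : Fin 3, ∑ b : Bool, lv t (ych t y a b) n 0 :=
        Finset.sum_le_sum_of_subset (Finset.filter_subset _ _)

lemma lemmaII {t : ℝ} (ht0 : 0 ≤ t) : ∀ (n : ℕ) (y : ℝ), Cnd t n y ≤ (Bser t y n)⁻¹ := by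
  intro n
  induction n with
  | zero =>
    intro y
    have : Bser t y 0 = 0 := by simp [Bser]
    rw [this]
    simp
  | succ n ih =>
    intro y
    classical
    set A : Finset (Fin 3) := Finset.univ.filter
      (fun a : Fin 3 => (∑ b : Bool, Cnd t n (ych t y a b)) ≠ 0) with hA
    set lam : Fin 3 → ℕ → ℝ≥0∞ :=
      fun a m => ∑ b : Bool, (lv t (ych t y a b) n m : ℝ≥0∞) with hlam
    set Z : Fin 3 → ℕ → ℝ≥0∞ := fun a k => if k = 0 then 1 else 2^k / lam a k with hZ
    -- per-a series bound
    have haux : ∀ a : Fin 3,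
        uC (∑ b : Bool, Cnd t n (ych t y a b)) ≤ (∑ k ∈ Finset.range (n+1), Z a k)⁻¹ := by
      intro a
      set Ca : ℝ≥0∞ := ∑ b : Bool, Cnd t n (ych t y a b) with hCa
      have hCB : Ca ≤ ∑ b : Bool, (Bser t (ych t y a b) n)⁻¹ :=
        Finset.sum_le_sum (fun b _ => ih (ych t y a b))
      have hWa : (∑ b : Bool, (Bser t (ych t y a b) n)⁻¹)⁻¹ ≤ Ca⁻¹ :=
        ENNReal.inv_le_inv.mpr hCB
      -- inner Milne
      have hmil : ∑ k ∈ Finset.range n,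
            (∑ b : Bool, ((2^k : ℝ≥0∞) / (lv t (ych t y a b) n (k+1) : ℝ≥0∞))⁻¹)⁻¹
          ≤ (∑ b : Bool, (Bser t (ych t y a b) n)⁻¹)⁻¹ := by
        have := milne_sum (Finset.univ : Finset Bool) (Finset.range n)
          (fun k b => (2^k : ℝ≥0∞) / (lv t (ych t y a b) n (k+1) : ℝ≥0∞))
        convert this using 3
        rfl
      -- identify the inner parallel sums
      have hterm : ∀ k, (∑ b : Bool, ((2^k : ℝ≥0∞) / (lv t (ych t y a b) n (k+1) : ℝ≥0∞))⁻¹)⁻¹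
          = 2^k / lam a (k+1) := by
        intro k
        have h2k0 : ((2:ℝ≥0∞)^k) ≠ 0 := by positivity
        have h2kt : ((2:ℝ≥0∞)^k) ≠ ⊤ := by
          exact ENNReal.pow_ne_top (by norm_num)
        have hstep : ∀ b : Bool, ((2^k : ℝ≥0∞) / (lv t (ych t y a b) n (k+1) : ℝ≥0∞))⁻¹
            = (lv t (ych t y a b) n (k+1) : ℝ≥0∞) / 2^k := by
          intro b
          rw [ENNReal.inv_div (Or.inr h2kt) (Or.inr h2k0)]
        rw [Fintype.sum_bool, hstep, hstep, ENNReal.div_add_div_same]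
        rw [ENNReal.inv_div (Or.inl h2kt) (Or.inl h2k0)]
        simp only [hlam, Fintype.sum_bool]
      have hser : 1 + 2 * Ca⁻¹ ≥ ∑ k ∈ Finset.range (n+1), Z a k := by
        rw [Finset.sum_range_succ']
        have hZ0 : Z a 0 = 1 := by rw [hZ]; simp
        have hZk : ∀ k, Z a (k+1) = 2 * (2^k / lam a (k+1)) := by
          intro k
          rw [hZ]
          simp only [Nat.succ_ne_zero, if_false]
          rw [pow_succ]
          rw [div_eq_mul_inv, div_eq_mul_inv]
          ring
        rw [hZ0]
        have : ∑ k ∈ Finset.range n, Z a (k+1) = 2 * ∑ k ∈ Finset.range n, (2^k / lam a (k+1)) := by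
          rw [Finset.mul_sum]
          exact Finset.sum_congr rfl (fun k _ => hZk k)
        rw [this]
        rw [ge_iff_le]
        have hchain : ∑ k ∈ Finset.range n, ((2:ℝ≥0∞)^k / lam a (k+1)) ≤ Ca⁻¹ := by
          calc ∑ k ∈ Finset.range n, ((2:ℝ≥0∞)^k / lam a (k+1))
              = ∑ k ∈ Finset.range n,
                  (∑ b : Bool, ((2^k : ℝ≥0∞) / (lv t (ych t y a b) n (k+1) : ℝ≥0∞))⁻¹)⁻¹ :=
                Finset.sum_congr rfl (fun k _ => (hterm k).symm)
            _ ≤ (∑ b : Bool, (Bser t (ych t y a b) n)⁻¹)⁻¹ := hmil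
            _ ≤ Ca⁻¹ := hWa
        calc 2 * (∑ k ∈ Finset.range n, ((2:ℝ≥0∞)^k / lam a (k+1))) + 1
            ≤ 2 * Ca⁻¹ + 1 := add_le_add_left (mul_le_mul_right hchain 2) 1
          _ = 1 + 2 * Ca⁻¹ := add_comm _ _
      calc uC Ca = (1 + 2*Ca⁻¹)⁻¹ := rfl
        _ ≤ (∑ k ∈ Finset.range (n+1), Z a k)⁻¹ := ENNReal.inv_le_inv.mpr hser
    -- restrict sum to A
    have hCndA : Cnd t (n+1) y = ∑ a ∈ A, uC (∑ b : Bool, Cnd t n (ych t y a b)) := by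
      show (∑ a : Fin 3, uC (∑ b : Bool, Cnd t n (ych t y a b))) = _
      rw [hA]
      rw [Finset.sum_filter_of_ne]
      intro a _ hne
      exact uC_ne_zero hne
    -- outer Milne
    have houter : ∑ a ∈ A, (∑ k ∈ Finset.range (n+1), Z a k)⁻¹
        ≤ (∑ k ∈ Finset.range (n+1), (∑ a ∈ A, (Z a k)⁻¹)⁻¹)⁻¹ := by
      have := milne_sum A (Finset.range (n+1)) (fun k a => Z a k)
      calc ∑ a ∈ A, (∑ k ∈ Finset.range (n+1), Z a k)⁻¹
          = ((∑ a ∈ A, (∑ k ∈ Finset.range (n+1), Z a k)⁻¹)⁻¹)⁻¹ := (inv_inv _).symm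
        _ ≤ (∑ k ∈ Finset.range (n+1), (∑ a ∈ A, (Z a k)⁻¹)⁻¹)⁻¹ :=
            ENNReal.inv_le_inv.mpr this
    -- compare with Bser
    have hBle : Bser t y (n+1) ≤ ∑ k ∈ Finset.range (n+1), (∑ a ∈ A, (Z a k)⁻¹)⁻¹ := by
      unfold Bser
      refine Finset.sum_le_sum (fun k hk => ?_)
      rcases Nat.eq_zero_or_pos k with hk0 | hkpos
      · subst hk0
        have hZ0 : ∀ a ∈ A, (Z a 0)⁻¹ = 1 := by
          intro a _
          rw [hZ]
          simp
        rw [Finset.sum_congr rfl hZ0, Finset.sum_const, nsmul_eq_mul, mul_one]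
        have hcard : (A.card : ℝ≥0∞) ≤ (lv t y (n+1) 1 : ℝ≥0∞) := by
          exact_mod_cast card_filter_le_lv ht0 n y
        calc (2^0 : ℝ≥0∞) / (lv t y (n+1) (0+1) : ℝ≥0∞)
            = (lv t y (n+1) 1 : ℝ≥0∞)⁻¹ := by
              rw [pow_zero, one_div]
          _ ≤ ((A.card : ℝ≥0∞))⁻¹ := ENNReal.inv_le_inv.mpr hcard
      · obtain ⟨k', rfl⟩ := Nat.exists_eq_succ_of_ne_zero (Nat.pos_iff_ne_zero.mp hkpos)
        have hZk : ∀ a ∈ A, (Z a (k'+1))⁻¹ = lam a (k'+1) / 2^(k'+1) := by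
          intro a _
          rw [hZ]
          simp only [Nat.succ_ne_zero, if_false]
          have h2k0 : ((2:ℝ≥0∞)^(k'+1)) ≠ 0 := by positivity
          have h2kt : ((2:ℝ≥0∞)^(k'+1)) ≠ ⊤ := ENNReal.pow_ne_top (by norm_num)
          rw [ENNReal.inv_div (Or.inr h2kt) (Or.inr h2k0)]
        rw [Finset.sum_congr rfl hZk]
        simp only [div_eq_mul_inv, ← Finset.sum_mul]
        have h2k0 : ((2:ℝ≥0∞)^(k'+1)) ≠ 0 := by positivity
        have h2kt : ((2:ℝ≥0∞)^(k'+1)) ≠ ⊤ := ENNReal.pow_ne_top (by norm_num)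
        have hRHS : ((∑ i ∈ A, lam i (k'+1)) * ((2:ℝ≥0∞)^(k'+1))⁻¹)⁻¹
            = 2^(k'+1) / (∑ i ∈ A, lam i (k'+1)) := by
          rw [ENNReal.mul_inv (Or.inr (ENNReal.inv_ne_top.mpr h2k0))
            (Or.inr (ENNReal.inv_ne_zero.mpr h2kt)), inv_inv, mul_comm, div_eq_mul_inv]
        rw [hRHS]
        refine ENNReal.div_le_div_left ?_ _
        -- ∑_{a∈A} lam ≤ lv (n+1) (k'+2)
        have hrec : lv t y (n+1) (k'+1+1) = ∑ a : Fin 3, ∑ b : Bool, lv t (ych t y a b) n (k'+1) :=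
          lv_succ t y n (k'+1)
        have : ∑ a ∈ A, lam a (k'+1) ≤ ∑ a : Fin 3, lam a (k'+1) :=
          Finset.sum_le_sum_of_subset (Finset.filter_subset _ _)
        calc ∑ a ∈ A, lam a (k'+1) ≤ ∑ a : Fin 3, lam a (k'+1) := this
          _ = (lv t y (n+1) (k'+1+1) : ℝ≥0∞) := by
              rw [hrec]
              push_cast
              rfl
    calc Cnd t (n+1) y = ∑ a ∈ A, uC (∑ b : Bool, Cnd t n (ych t y a b)) := hCndA
      _ ≤ ∑ a ∈ A, (∑ k ∈ Finset.range (n+1), Z a k)⁻¹ :=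
          Finset.sum_le_sum (fun a _ => haux a)
      _ ≤ (∑ k ∈ Finset.range (n+1), (∑ a ∈ A, (Z a k)⁻¹)⁻¹)⁻¹ := houter
      _ ≤ (Bser t y (n+1))⁻¹ := ENNReal.inv_le_inv.mpr hBle

/-! Part 7: conductance upper bound -/

lemma Bser_ge {t : ℝ} (ht1 : 1/3 < t) (ht2 : t < 1) (y : ℝ) (n : ℕ) :
    (n : ℝ≥0∞) / 10 ≤ Bser t y n := by
  have hterm : ∀ k ∈ Finset.range n,
      (1:ℝ≥0∞)/10 ≤ (2^k : ℝ≥0∞) / (lv t y n (k+1) : ℝ≥0∞) := by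
    intro k _
    have hlv0 : lv t y n (k+1) ≤ 5 * 2^(k+1) := lv_bound ht1 ht2 y n (k+1)
    have hlv : (lv t y n (k+1) : ℝ≥0∞) ≤ ((5 * 2^(k+1) : ℕ) : ℝ≥0∞) := by
      exact_mod_cast hlv0
    have h10 : ((5 * 2^(k+1) : ℕ) : ℝ≥0∞) = 2^k * 10 := by push_cast; ring
    have h2k0 : ((2:ℝ≥0∞)^k) ≠ 0 := by positivity
    have h2kt : ((2:ℝ≥0∞)^k) ≠ ⊤ := ENNReal.pow_ne_top (by norm_num)
    calc (1:ℝ≥0∞)/10 = (2^k * 1)/(2^k * 10) := by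
          rw [ENNReal.mul_div_mul_left _ _ h2k0 h2kt]
      _ = 2^k / (2^k * 10) := by rw [mul_one]
      _ ≤ (2^k : ℝ≥0∞) / (lv t y n (k+1) : ℝ≥0∞) :=
          ENNReal.div_le_div_left (le_trans hlv (le_of_eq h10)) _
  calc (n : ℝ≥0∞)/10 = ∑ _k ∈ Finset.range n, (1:ℝ≥0∞)/10 := by
        rw [Finset.sum_const, Finset.card_range, nsmul_eq_mul, mul_one_div]
    _ ≤ Bser t y n := Finset.sum_le_sum hterm

lemma Cnd_le {t : ℝ} (ht1 : 1/3 < t) (ht2 : t < 1) (n : ℕ) (y : ℝ) :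
    Cnd t n y ≤ 10 / (n : ℝ≥0∞) := by
  have ht0 : (0:ℝ) ≤ t := by linarith
  calc Cnd t n y ≤ (Bser t y n)⁻¹ := lemmaII ht0 n y
    _ ≤ ((n : ℝ≥0∞)/10)⁻¹ := ENNReal.inv_le_inv.mpr (Bser_ge ht1 ht2 y n)
    _ = 10 / (n : ℝ≥0∞) := by
        rw [ENNReal.inv_div (Or.inl (by norm_num)) (Or.inl (by norm_num))]

/-! Part 8: survival bound (Lemma I) -/

noncomputable def ur (C : ℝ≥0∞) : ℝ := (uC C).toReal

noncomputable def FF (C : ℝ≥0∞) : ℝ :=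
  if C = ⊤ then 0 else max 0 ((1 - C.toReal)/(1 + C.toReal))

lemma ur_nonneg (C : ℝ≥0∞) : 0 ≤ ur C := ENNReal.toReal_nonneg

lemma ur_le_one (C : ℝ≥0∞) : ur C ≤ 1 := by
  unfold ur
  calc (uC C).toReal ≤ (1 : ℝ≥0∞).toReal :=
        ENNReal.toReal_mono (by norm_num) (uC_le_one C)
    _ = 1 := by simp

lemma uC_ne_top (C : ℝ≥0∞) : uC C ≠ ⊤ :=
  fun h => by simpa [h] using uC_le_one C

lemma ur_mono {C D : ℝ≥0∞} (h : C ≤ D) : ur C ≤ ur D :=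
  ENNReal.toReal_mono (uC_ne_top D) (uC_mono h)

lemma ur_eq (C : ℝ≥0∞) (hC : C ≠ ⊤) : ur C = C.toReal / (C.toReal + 2) := by
  lift C to ℝ≥0 using hC
  by_cases h0 : C = 0
  · subst h0
    simp [ur, uC_zero]
  · unfold ur uC
    have hC0 : (C : ℝ≥0∞) ≠ 0 := by exact_mod_cast h0
    have hCinv : ((C : ℝ≥0∞))⁻¹ ≠ ⊤ := ENNReal.inv_ne_top.mpr hC0
    have hfin : (1 + 2*((C:ℝ≥0∞))⁻¹) ≠ ⊤ := by
      refine ENNReal.add_ne_top.mpr ⟨by norm_num, ?_⟩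
      exact ENNReal.mul_ne_top (by norm_num) hCinv
    have hne0 : (1 + 2*((C:ℝ≥0∞))⁻¹) ≠ 0 := by
      intro h
      have := add_eq_zero.mp h
      norm_num at this
    rw [ENNReal.toReal_inv, ENNReal.toReal_add (by norm_num) (ENNReal.mul_ne_top (by norm_num) hCinv),
      ENNReal.toReal_mul, ENNReal.toReal_inv]
    have hc' : (0:ℝ) < (C:ℝ≥0∞).toReal := by
      rw [ENNReal.toReal_pos_iff]
      constructor
      · exact pos_iff_ne_zero.mpr hC0
      · exact ENNReal.coe_lt_top
    set c := (C:ℝ≥0∞).toReal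
    have : (1:ℝ≥0∞).toReal = (1:ℝ) := by simp
    rw [this, (by norm_num : ((2:ℝ≥0∞)).toReal = (2:ℝ))]
    rw [inv_eq_one_div, inv_eq_one_div]
    field_simp

lemma FF_top : FF ⊤ = 0 := by simp [FF]

lemma FF_nonneg (C : ℝ≥0∞) : 0 ≤ FF C := by
  unfold FF
  split <;> simp [le_max_left]

lemma two_div_bound (C : ℝ≥0∞) : 2 * (1 - ur C)/(1 + ur C) ≤ 1 + FF C := by
  by_cases hC : C = ⊤
  · subst hC
    have h1 : ur ⊤ = 1 := by
      unfold ur uC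
      simp
    rw [h1, FF_top]
    norm_num
  · rw [ur_eq C hC]
    unfold FF
    rw [if_neg hC]
    set c := C.toReal with hc
    have hc0 : 0 ≤ c := ENNReal.toReal_nonneg
    have h2 : (0:ℝ) < c + 2 := by linarith
    have hkey : 2 * (1 - c/(c+2))/(1 + c/(c+2)) = 2/(c+1) := by
      rw [div_eq_div_iff (by positivity) (by positivity)]
      field_simp
      ring
    rw [hkey]
    by_cases hc1 : c ≤ 1
    · have hmx : max 0 ((1-c)/(1+c)) = (1-c)/(1+c) := by
        rw [max_eq_right]
        exact div_nonneg (by linarith) (by linarith)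
      rw [hmx]
      have heq : 1 + (1-c)/(1+c) = 2/(1+c) := by
        field_simp
        ring
      rw [heq]
      apply le_of_eq
      rw [add_comm]
    · push_neg at hc1
      have h1 : 2/(c+1) ≤ 1 := by
        rw [div_le_one (by positivity)]
        linarith
      have h2' : (0:ℝ) ≤ max 0 ((1-c)/(1+c)) := le_max_left _ _
      linarith

lemma frac_antitone {u v : ℝ} (h0 : 0 ≤ u) (huv : u ≤ v) (hv : 0 ≤ v) :
    (1 - v)/(1 + v) ≤ (1 - u)/(1 + u) := by
  rw [div_le_div_iff₀ (by linarith) (by linarith)]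
  nlinarith

lemma frac_two_var {x y : ℝ} (hx : 0 ≤ x) (hy : 0 ≤ y) :
    (1 - (x+y))/(1 + (x+y)) ≤ (1 - x)/(1 + x) * ((1 - y)/(1 + y)) := by
  rw [div_mul_div_comm, div_le_div_iff₀ (by linarith) (by positivity)]
  nlinarith [mul_nonneg (mul_nonneg hx hx) hy, mul_nonneg (mul_nonneg hy hy) hx]

lemma frac_nonneg {u : ℝ} (h0 : 0 ≤ u) (h1 : u ≤ 1) : 0 ≤ (1 - u)/(1 + u) := by
  apply div_nonneg <;> linarith

lemma prod_three_bound (u : Fin 3 → ℝ) (h0 : ∀ a, 0 ≤ u a) (h1 : ∀ a, u a ≤ 1) :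
    max 0 ((1 - ∑ a, u a)/(1 + ∑ a, u a)) ≤ ∏ a, (1 - u a)/(1 + u a) := by
  have hsum : ∑ a, u a = u 0 + u 1 + u 2 := by
    rw [Fin.sum_univ_three]
  have hprod : ∏ a, (1 - u a)/(1 + u a)
      = (1 - u 0)/(1 + u 0) * ((1 - u 1)/(1 + u 1)) * ((1 - u 2)/(1 + u 2)) := by
    rw [Fin.prod_univ_three]
  rw [hsum, hprod]
  have f0 := frac_nonneg (h0 0) (h1 0)
  have f1 := frac_nonneg (h0 1) (h1 1)
  have f2 := frac_nonneg (h0 2) (h1 2)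
  have step1 : (1 - (u 0 + u 1))/(1 + (u 0 + u 1))
      ≤ (1 - u 0)/(1 + u 0) * ((1 - u 1)/(1 + u 1)) := frac_two_var (h0 0) (h0 1)
  have step2 : (1 - (u 0 + u 1 + u 2))/(1 + (u 0 + u 1 + u 2))
      ≤ (1 - (u 0 + u 1))/(1 + (u 0 + u 1)) * ((1 - u 2)/(1 + u 2)) := by
    have := frac_two_var (by linarith [h0 0, h0 1] : (0:ℝ) ≤ u 0 + u 1) (h0 2)
    convert this using 3 <;> ring
  have hQ : 0 ≤ (1 - u 0)/(1 + u 0) * ((1 - u 1)/(1 + u 1)) * ((1 - u 2)/(1 + u 2)) :=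
    mul_nonneg (mul_nonneg f0 f1) f2
  have hchain : (1 - (u 0 + u 1 + u 2))/(1 + (u 0 + u 1 + u 2))
      ≤ (1 - u 0)/(1 + u 0) * ((1 - u 1)/(1 + u 1)) * ((1 - u 2)/(1 + u 2)) :=
    le_trans step2 (mul_le_mul_of_nonneg_right step1 f2)
  exact max_le hQ hchain


/-! Part 8b: Lemma I -/

lemma ych_true_eq (t y : ℝ) (a : Fin 3) : ych t y a true = ych t y a false - 2*t := by
  unfold ych
  simp

lemma coN_eq_Tot {n : ℕ} {t y : ℝ} (h : ∀ r, ¬ Ev n t y r) : coN n t y = Tot n := by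
  have h0 : Nat.card {r : TernaryEdges n → Bool // Ev n t y r} = 0 := by
    have : IsEmpty {r : TernaryEdges n → Bool // Ev n t y r} := ⟨fun x => h x.1 x.2⟩
    exact Nat.card_of_isEmpty
  have hsum := card_Ev_add_coN n t y
  omega

lemma lemmaI {t : ℝ} (ht : 1/3 < t) : ∀ (n : ℕ) (y : ℝ),
    FF (Cnd t n y) * (Tot n : ℝ) ≤ (coN n t y : ℝ) := by
  have ht0 : (0:ℝ) ≤ t := by linarith
  intro n
  induction n with
  | zero =>
    intro y
    by_cases hw : 0 ≤ y ∧ y ≤ 1/3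
    · have hC : Cnd t 0 y = ⊤ := by unfold Cnd; rw [if_pos hw]
      rw [hC, FF_top, zero_mul]
      positivity
    · have hC : Cnd t 0 y = 0 := by unfold Cnd; rw [if_neg hw]
      have hFF : FF (0 : ℝ≥0∞) = 1 := by
        unfold FF
        rw [if_neg (by norm_num)]
        norm_num
      rw [hC, hFF, one_mul]
      have hempty : ∀ r, ¬ Ev 0 t y r := by
        intro r hr
        have hwin := Ev_window ht0 hr
        rw [Wd_zero] at hwin
        exact hw hwin
      rw [coN_eq_Tot hempty]
  | succ n ih =>
    intro y
    set C' : Fin 3 → ℝ≥0∞ := fun a => ∑ b : Bool, Cnd t n (ych t y a b) with hC'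
    set u : Fin 3 → ℝ := fun a => ur (C' a) with hu
    have hu0 : ∀ a, 0 ≤ u a := fun a => ur_nonneg _
    have hu1 : ∀ a, u a ≤ 1 := fun a => ur_le_one _
    have hper : ∀ a : Fin 3,
        (1 - u a)/(1 + u a) * (2 * (Tot n : ℝ))
          ≤ (coN n t (ych t y a true) : ℝ) + (coN n t (ych t y a false) : ℝ) := by
      intro a
      have hcases : (∀ r, ¬ Ev n t (ych t y a true) r)
          ∨ (∀ r, ¬ Ev n t (ych t y a false) r) := by
        by_cases hT : ∃ r, Ev n t (ych t y a true) r
        · right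
          intro r hr
          refine Ev_excl ht ⟨r, hr⟩ ?_
          rw [← ych_true_eq]
          exact hT
        · left
          push_neg at hT
          exact fun r hr => hT r hr
      have key : ∀ b : Bool,
          2 * ((1 - u a)/(1 + u a)) ≤ 1 + FF (Cnd t n (ych t y a b)) := by
        intro b
        set D := Cnd t n (ych t y a b) with hD
        have hDle : D ≤ C' a := by
          rw [hC']
          exact Finset.single_le_sum (f := fun c : Bool => Cnd t n (ych t y a c))
            (fun _ _ => zero_le) (Finset.mem_univ b)
        have hmon : ur D ≤ u a := ur_mono hDle
        have h1 : (1 - u a)/(1 + u a) ≤ (1 - ur D)/(1 + ur D) :=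
          frac_antitone (ur_nonneg D) hmon (hu0 a)
        have h2 := two_div_bound D
        calc 2 * ((1 - u a)/(1 + u a)) ≤ 2 * ((1 - ur D)/(1 + ur D)) := by linarith
          _ = 2 * (1 - ur D)/(1 + ur D) := by ring
          _ ≤ 1 + FF D := h2
      have hTn : (0:ℝ) ≤ (Tot n : ℝ) := Nat.cast_nonneg _
      rcases hcases with hT | hF
      · have hTot : (coN n t (ych t y a true) : ℝ) = (Tot n : ℝ) := by
          rw [coN_eq_Tot hT]
        have hIH := ih (ych t y a false)
        have hkey := key false
        nlinarith [FF_nonneg (Cnd t n (ych t y a false))]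
      · have hTot : (coN n t (ych t y a false) : ℝ) = (Tot n : ℝ) := by
          rw [coN_eq_Tot hF]
        have hIH := ih (ych t y a true)
        have hkey := key true
        nlinarith [FF_nonneg (Cnd t n (ych t y a true))]
    have hCnd : Cnd t (n+1) y = ∑ a : Fin 3, uC (C' a) := rfl
    have hne : Cnd t (n+1) y ≠ ⊤ := by
      rw [hCnd]
      exact ENNReal.sum_ne_top.mpr (fun a _ => uC_ne_top _)
    have hU : (Cnd t (n+1) y).toReal = ∑ a : Fin 3, u a := by
      rw [hCnd, ENNReal.toReal_sum (fun a _ => uC_ne_top _)]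
      simp only [hu, ur]
    have hFFeq : FF (Cnd t (n+1) y) = max 0 ((1 - ∑ a, u a)/(1 + ∑ a, u a)) := by
      unfold FF
      rw [if_neg hne, hU]
    rw [hFFeq, coN_succ, Tot_succ]
    push_cast
    have hprod := prod_three_bound u hu0 hu1
    calc max 0 ((1 - ∑ a, u a)/(1 + ∑ a, u a)) * ((2 * (Tot n : ℝ))^3)
        ≤ (∏ a, (1 - u a)/(1 + u a)) * ((2 * (Tot n : ℝ))^3) :=
          mul_le_mul_of_nonneg_right hprod (by positivity)
      _ = ∏ a : Fin 3, ((1 - u a)/(1 + u a) * (2 * (Tot n : ℝ))) := by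
          rw [Finset.prod_mul_distrib, Finset.prod_const]
          norm_num
      _ ≤ ∏ a : Fin 3, ((coN n t (ych t y a true) : ℝ) + (coN n t (ych t y a false) : ℝ)) := by
          apply Finset.prod_le_prod
          · intro a _
            exact mul_nonneg (frac_nonneg (hu0 a) (hu1 a)) (by positivity)
          · intro a _
            exact hper a

end PnProof

open PnProof

/-- Corollary 2.3: for `1/3 < t < 1`, the probability that `(t, y)` lies in the
random Kakeya set `K_{σ_n}` is at most `C / n` for an absolute constant `C`. -/
theorem Pn_le_div :
    ∃ C : ℝ, 0 < C ∧ ∀ (n : ℕ), 1 ≤ n → ∀ t y : ℝ, 1 / 3 < t → t < 1 →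
      Pn n t y ≤ C / n := by
  refine ⟨20, by norm_num, ?_⟩
  intro n hn t y ht1 ht2
  have ht0 : (0:ℝ) ≤ t := by linarith
  have hT0 : (0:ℝ) < (Tot n : ℝ) := by exact_mod_cast Tot_pos n
  have hsum := card_Ev_add_coN n t y
  have hPn : Pn n t y = ((Tot n : ℝ) - (coN n t y : ℝ)) / (Tot n : ℝ) := by
    unfold Pn
    have hcard : (Nat.card {r : TernaryEdges n → Bool // (t, y) ∈ Kset (sigmaOf n r)} : ℝ)
        = (Tot n : ℝ) - (coN n t y : ℝ) := by
      have h1 : (Nat.card {r : TernaryEdges n → Bool // Ev n t y r} : ℝ)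
          + (coN n t y : ℝ) = (Tot n : ℝ) := by exact_mod_cast hsum
      have h2 : Nat.card {r : TernaryEdges n → Bool // (t, y) ∈ Kset (sigmaOf n r)}
          = Nat.card {r : TernaryEdges n → Bool // Ev n t y r} := rfl
      rw [h2]
      linarith
    rw [hcard]
    rfl
  have key1 := lemmaI ht1 n y
  have hPnle : Pn n t y ≤ 1 - FF (Cnd t n y) := by
    rw [hPn, div_le_iff₀ hT0]
    nlinarith
  have hn0 : (n:ℝ≥0∞) ≠ 0 := by
    simp only [ne_eq, Nat.cast_eq_zero]
    omega
  have hC := Cnd_le ht1 ht2 n y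
  have hdivne : ((10:ℝ≥0∞) / (n:ℝ≥0∞)) ≠ ⊤ := (ENNReal.div_lt_top (by norm_num) hn0).ne
  have hCne : Cnd t n y ≠ ⊤ := by
    intro h
    rw [h] at hC
    exact hdivne (top_le_iff.mp hC)
  have hCt : (Cnd t n y).toReal ≤ 10 / (n:ℝ) := by
    have h1 : ((10:ℝ≥0∞) / (n:ℝ≥0∞)).toReal = 10/(n:ℝ) := by
      rw [ENNReal.toReal_div]
      norm_num
    rw [← h1]
    exact ENNReal.toReal_mono hdivne hC
  have hc0 : (0:ℝ) ≤ (Cnd t n y).toReal := ENNReal.toReal_nonneg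
  have hFFb : 1 - FF (Cnd t n y) ≤ 2 * (Cnd t n y).toReal := by
    unfold FF
    rw [if_neg hCne]
    set c := (Cnd t n y).toReal with hc
    by_cases hc1 : c ≤ 1
    · rw [max_eq_right (div_nonneg (by linarith) (by linarith))]
      have heq : 1 - (1-c)/(1+c) = 2*c/(1+c) := by
        field_simp
        ring
      rw [heq, div_le_iff₀ (by linarith : (0:ℝ) < 1 + c)]
      nlinarith
    · push_neg at hc1
      have hmx : max 0 ((1-c)/(1+c)) = 0 := by
        rw [max_eq_left]
        apply div_nonpos_of_nonpos_of_nonneg <;> linarith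
      rw [hmx]
      linarith
  calc Pn n t y ≤ 1 - FF (Cnd t n y) := hPnle
    _ ≤ 2 * (Cnd t n y).toReal := hFFb
    _ ≤ 2 * (10/(n:ℝ)) := by linarith
    _ = 20 / n := by ring
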